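/- For any partitions β and α, the composition D_β ∘ U_α equals the sum over all partitions λ of U_{s_{α/λ}} ∘ D_{s_{β/λ}}, where U_f is multiplication by f and D_f is its adjoint with respect to the Hall inner product on symmetric functions. -/

import Mathlib

open scoped TensorProduct Classical

noncomputable section

/-- The single-row Young diagram with `k` boxes, whose Schur function is `h_k`
and whose power sum is `p_k`. -/
def rowDiagram (k : ℕ) : YoungDiagram :=
  YoungDiagram.ofRowLens [k] ((List.pairwise_singleton _ k).sortedGE)

/-- The quantity `z_λ = ∏ i^{m_i} m_i!` attached to a partition (Young diagram). -/
def zee (μ : YoungDiagram) : ℚ :=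
  ((μ.rowLens.prod * (μ.rowLens.dedup.map fun i => (μ.rowLens.count i).factorial).prod : ℕ) : ℚ)

namespace SkewAux

def rows (μ : YoungDiagram) : Multiset ℕ := ↑μ.rowLens

lemma pos_of_mem_rows {μ : YoungDiagram} {x : ℕ} (hx : x ∈ rows μ) : 0 < x :=
  μ.pos_of_mem_rowLens x hx

lemma rows_injective : Function.Injective rows := by
  intro μ ν h
  have hs : μ.rowLens = ν.rowLens :=
    List.Perm.eq_of_sortedGE μ.rowLens_sorted ν.rowLens_sorted (Multiset.coe_eq_coe.mp h)
  rw [← YoungDiagram.ofRowLens_to_rowLens_eq_self (μ := μ),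
    ← YoungDiagram.ofRowLens_to_rowLens_eq_self (μ := ν)]
  congr 1

lemma rows_inj {μ ν : YoungDiagram} : rows μ = rows ν ↔ μ = ν :=
  ⟨fun h => rows_injective h, fun h => by rw [h]⟩

def mdiag (m : Multiset ℕ) : YoungDiagram :=
  YoungDiagram.ofRowLens (m.sort (· ≥ ·)) ((Multiset.pairwise_sort m (· ≥ ·)).sortedGE)

lemma rows_mdiag {m : Multiset ℕ} (hm : ∀ x ∈ m, 0 < x) : rows (mdiag m) = m := by
  unfold rows mdiag
  rw [YoungDiagram.rowLens_ofRowLens_eq_self (fun x hx => hm x (by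
    rwa [← Multiset.mem_sort (r := (· ≥ ·))]))]
  exact Multiset.sort_eq m _

lemma rows_bot : rows ⊥ = 0 := by
  unfold rows
  have h : (⊥ : YoungDiagram).rowLens.length = 0 := by
    rw [YoungDiagram.length_rowLens]
    by_contra hc
    have : (0, 0) ∈ (⊥ : YoungDiagram) := by
      rw [YoungDiagram.mem_iff_lt_colLen]
      omega
    exact YoungDiagram.notMem_bot _ this
  rw [List.length_eq_zero_iff] at h
  rw [h]; rfl

lemma mdiag_zero : mdiag 0 = ⊥ :=
  rows_injective (by rw [rows_mdiag (by simp), rows_bot])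

lemma rows_rowDiagram {k : ℕ} (hk : 0 < k) : rows (rowDiagram k) = {k} := by
  unfold rows rowDiagram
  rw [YoungDiagram.rowLens_ofRowLens_eq_self (by simpa using hk)]
  rfl

lemma rowDiagram_rowLens {k : ℕ} (hk : 0 < k) : (rowDiagram k).rowLens = [k] :=
  YoungDiagram.rowLens_ofRowLens_eq_self (by simpa using hk)

def wt (μ : YoungDiagram) : ℕ := (rows μ).sum

lemma length_le_sum (l : List ℕ) (hl : ∀ x ∈ l, 0 < x) : l.length ≤ l.sum := by
  induction l with
  | nil => simp
  | cons a t ih =>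
    simp only [List.length_cons, List.sum_cons]
    have ha := hl a (by simp)
    have := ih (fun x hx => hl x (by simp [hx]))
    omega

lemma wt_finite (n : ℕ) : {μ : YoungDiagram | wt μ ≤ n}.Finite := by
  have key : ∀ μ ∈ {μ : YoungDiagram | wt μ ≤ n},
      YoungDiagram.cells μ ∈ (Finset.range n ×ˢ Finset.range n).powerset := by
    intro μ hμ
    simp only [Finset.mem_powerset]
    intro c hc
    have hc' : c ∈ μ := hc
    obtain ⟨i, j⟩ := c
    have hrow : j < μ.rowLen i := YoungDiagram.mem_iff_lt_rowLen.mp hc'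
    have hcol : i < μ.colLen 0 := by
      rw [← YoungDiagram.mem_iff_lt_colLen]
      exact μ.up_left_mem (le_refl i) (Nat.zero_le j) hc'
    have hlen : μ.rowLens.length = μ.colLen 0 := YoungDiagram.length_rowLens
    have hwt : μ.rowLens.sum ≤ n := hμ
    have hlsum : μ.rowLens.length ≤ μ.rowLens.sum :=
      length_le_sum _ μ.pos_of_mem_rowLens
    have hi : i < n := by omega
    have hmem : μ.rowLen i ∈ μ.rowLens := by
      have hilen : i < μ.rowLens.length := by omega
      have := YoungDiagram.get_rowLens (μ := μ) (i := i) (h := hilen)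
      rw [← this]
      exact List.getElem_mem hilen
    have hj : j < n := by
      have := List.le_sum_of_mem hmem
      omega
    simp only [Finset.mem_product, Finset.mem_range]
    exact ⟨hi, hj⟩
  have hfin : (Set.Finite (((Finset.range n ×ˢ Finset.range n).powerset : Finset (Finset (ℕ × ℕ))) : Set (Finset (ℕ × ℕ)))) := Finset.finite_toSet _
  apply Set.Finite.of_finite_image (f := YoungDiagram.cells)
  · exact hfin.subset (by intro x hx; obtain ⟨μ, hμ, rfl⟩ := hx; exact key μ hμ)
  · intro a _ b _ hab
    exact YoungDiagram.ext_iff.mpr (by rw [hab])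

/-- zee on multisets -/
def zeeM (m : Multiset ℕ) : ℚ :=
  ((m.prod * (m.toFinset.prod fun i => (m.count i).factorial) : ℕ) : ℚ)

lemma zee_eq_zeeM (μ : YoungDiagram) : zee μ = zeeM (rows μ) := by
  unfold zee zeeM rows
  congr 2
  have h1 : (↑μ.rowLens : Multiset ℕ).toFinset = μ.rowLens.dedup.toFinset := by
    ext x; simp
  rw [h1, List.prod_toFinset _ μ.rowLens.nodup_dedup]
  congr 1
  apply List.map_congr_left
  intro i _
  congr 1
  simp [List.count_dedup]

lemma factprod_cons (k : ℕ) (m : Multiset ℕ) :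
    ((k ::ₘ m).toFinset.prod fun i => ((k ::ₘ m).count i).factorial) =
      (m.count k + 1) * (m.toFinset.prod fun i => (m.count i).factorial) := by
  rw [Multiset.toFinset_cons]
  by_cases hk : k ∈ m.toFinset
  · rw [Finset.insert_eq_self.mpr hk]
    rw [← Finset.mul_prod_erase _ _ hk, ← Finset.mul_prod_erase _ (fun i => (m.count i).factorial) hk]
    have he : ∀ i ∈ m.toFinset.erase k, ((k ::ₘ m).count i).factorial = (m.count i).factorial := by
      intro i hi
      rw [Multiset.count_cons_of_ne (Finset.ne_of_mem_erase hi)]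
    rw [Finset.prod_congr rfl he, Multiset.count_cons_self, Nat.factorial_succ]
    ring
  · rw [Finset.prod_insert hk]
    have hknm : k ∉ m := fun h => hk (Multiset.mem_toFinset.mpr h)
    have hc0 : m.count k = 0 := Multiset.count_eq_zero.mpr hknm
    have he : ∀ i ∈ m.toFinset, ((k ::ₘ m).count i).factorial = (m.count i).factorial := by
      intro i hi
      have hik : i ≠ k := by rintro rfl; exact hknm (Multiset.mem_toFinset.mp hi)
      rw [Multiset.count_cons_of_ne hik]
    rw [Finset.prod_congr rfl he, Multiset.count_cons_self, hc0]
    simp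

lemma zeeM_cons (k : ℕ) (m : Multiset ℕ) :
    zeeM (k ::ₘ m) = ((k * (m.count k + 1) : ℕ) : ℚ) * zeeM m := by
  unfold zeeM
  rw [← Nat.cast_mul]
  congr 1
  rw [Multiset.prod_cons, factprod_cons]
  ring

lemma zeeM_ne_zero {m : Multiset ℕ} (hm : ∀ x ∈ m, 0 < x) : zeeM m ≠ 0 := by
  unfold zeeM
  rw [Nat.cast_ne_zero]
  apply Nat.mul_ne_zero
  · exact (Multiset.prod_pos hm).ne'
  · apply Finset.prod_ne_zero_iff.mpr
    intro i _
    exact (Nat.factorial_pos _).ne'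

lemma zee_ne_zero (μ : YoungDiagram) : zee μ ≠ 0 := by
  rw [zee_eq_zeeM]; exact zeeM_ne_zero (fun x hx => pos_of_mem_rows hx)

end SkewAux


/-- The ring of symmetric functions over `ℚ`, presented with its Schur basis `s`,
its power-sum basis `p`, the Hall inner product (for which the Schur functions are
orthonormal and `⟨p_λ, p_μ⟩ = δ_{λμ} z_λ`), the skewing operators `D f` (adjoint of
multiplication by `f`), and the Kronecker product `kron`
(determined by `p_λ ∗ p_μ = δ_{λμ} z_λ p_λ`). -/
structure SymmFn (Λ : Type*) [CommRing Λ] [Algebra ℚ Λ] where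
  /-- the Schur basis -/
  s : Module.Basis YoungDiagram ℚ Λ
  /-- the power-sum basis -/
  p : Module.Basis YoungDiagram ℚ Λ
  /-- the Hall inner product -/
  inner : Λ →ₗ[ℚ] Λ →ₗ[ℚ] ℚ
  inner_symm : ∀ f g, inner f g = inner g f
  inner_schur : ∀ μ ν, inner (s μ) (s ν) = if μ = ν then 1 else 0
  inner_power : ∀ μ ν, inner (p μ) (p ν) = if μ = ν then zee μ else 0
  power_mul : ∀ μ : YoungDiagram, p μ = (μ.rowLens.map fun k => p (rowDiagram k)).prod
  /-- the skewing operator `D f`, adjoint of multiplication by `f` -/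
  D : Λ → Λ →ₗ[ℚ] Λ
  D_adjoint : ∀ f g h, inner (D f g) h = inner g (f * h)
  /-- the Kronecker (internal) product -/
  kron : Λ →ₗ[ℚ] Λ →ₗ[ℚ] Λ
  kron_power : ∀ μ ν, kron (p μ) (p ν) = if μ = ν then zee μ • p μ else 0

namespace SymmFn

variable {Λ : Type*} [CommRing Λ] [Algebra ℚ Λ] (S : SymmFn Λ)

/-- The operator `U f` of multiplication by `f`. -/
def U (_S : SymmFn Λ) (f : Λ) : Λ →ₗ[ℚ] Λ := LinearMap.mulLeft ℚ f

/-- The skew Schur function `s_{α/θ} = D_{s_θ}(s_α)`. -/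
def skew (α θ : YoungDiagram) : Λ := S.D (S.s θ) (S.s α)


open SkewAux

lemma inner_s_eq (f : Λ) (ν : YoungDiagram) : S.inner f (S.s ν) = S.s.repr f ν := by
  conv_lhs => rw [← S.s.linearCombination_repr f]
  rw [Finsupp.linearCombination_apply, Finsupp.sum,
    map_sum, LinearMap.coe_sum, Finset.sum_apply]
  rw [Finset.sum_eq_single ν]
  · simp [S.inner_schur]
  · intro b _ hb
    simp [S.inner_schur, hb]
  · intro h
    simp [S.inner_schur, Finsupp.notMem_support_iff.mp h]

lemma inner_p_eq (f : Λ) (ν : YoungDiagram) : S.inner f (S.p ν) = zee ν * S.p.repr f ν := by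
  conv_lhs => rw [← S.p.linearCombination_repr f]
  rw [Finsupp.linearCombination_apply, Finsupp.sum,
    map_sum, LinearMap.coe_sum, Finset.sum_apply]
  rw [Finset.sum_eq_single ν]
  · simp only [map_smul, LinearMap.smul_apply, S.inner_power, if_pos rfl, smul_eq_mul]
    simp only [if_true]
    ring
  · intro b _ hb
    simp [S.inner_power, hb]
  · intro h
    simp [S.inner_power, Finsupp.notMem_support_iff.mp h]

lemma ext_inner_s {f g : Λ} (h : ∀ ν, S.inner f (S.s ν) = S.inner g (S.s ν)) : f = g := by
  apply S.s.repr.injective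
  ext ν
  have := h ν
  rwa [inner_s_eq, inner_s_eq] at this

lemma ext_inner_p {f g : Λ} (h : ∀ ν, S.inner f (S.p ν) = S.inner g (S.p ν)) : f = g := by
  apply S.p.repr.injective
  ext ν
  have := h ν
  rw [inner_p_eq, inner_p_eq] at this
  exact mul_left_cancel₀ (zee_ne_zero ν) this

lemma inner_s_symm_eq (f : Λ) (ν : YoungDiagram) : S.inner (S.s ν) f = S.s.repr f ν := by
  rw [S.inner_symm, inner_s_eq]

lemma D_one (g : Λ) : S.D 1 g = g := by
  apply ext_inner_s S
  intro ν
  rw [S.D_adjoint, one_mul]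

lemma D_mul (x y g : Λ) : S.D (x * y) g = S.D y (S.D x g) := by
  apply ext_inner_s S
  intro ν
  rw [S.D_adjoint, S.D_adjoint, S.D_adjoint, ← mul_assoc]

lemma D_add (x y g : Λ) : S.D (x + y) g = S.D x g + S.D y g := by
  apply ext_inner_s S
  intro ν
  rw [S.D_adjoint, map_add, LinearMap.add_apply, S.D_adjoint, S.D_adjoint, add_mul, map_add]

lemma D_smul (c : ℚ) (x g : Λ) : S.D (c • x) g = c • S.D x g := by
  apply ext_inner_s S
  intro ν
  rw [S.D_adjoint, map_smul, LinearMap.smul_apply, S.D_adjoint, smul_mul_assoc, map_smul]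

lemma D_zero (g : Λ) : S.D 0 g = 0 := by
  have := S.D_smul 0 0 g
  simp only [zero_smul] at this
  exact this

/-- p as multiset product over rows -/
lemma p_eq_rows_prod (μ : YoungDiagram) :
    S.p μ = ((rows μ).map fun k => S.p (rowDiagram k)).prod := by
  rw [S.power_mul μ]
  rfl

lemma one_eq_p_bot : (1 : Λ) = S.p ⊥ := by
  rw [p_eq_rows_prod, rows_bot]
  simp

lemma p_mul (μ ν : YoungDiagram) : S.p μ * S.p ν = S.p (mdiag (rows μ + rows ν)) := by
  rw [p_eq_rows_prod S μ, p_eq_rows_prod S ν, p_eq_rows_prod S (mdiag _),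
    rows_mdiag (fun x hx => by
      rcases Multiset.mem_add.mp hx with h | h
      · exact pos_of_mem_rows h
      · exact pos_of_mem_rows h)]
  rw [Multiset.map_add, Multiset.prod_add]

lemma inner_one_p (μ : YoungDiagram) : S.inner 1 (S.p μ) = if μ = ⊥ then 1 else 0 := by
  rw [one_eq_p_bot, S.inner_power]
  have hz : zee (⊥ : YoungDiagram) = 1 := by
    rw [zee_eq_zeeM, rows_bot]
    unfold zeeM
    simp
  by_cases h : μ = ⊥
  · subst h; simp [hz]
  · rw [if_neg (fun hc => h hc.symm), if_neg h]

lemma rows_mdiag_erase (μ : YoungDiagram) (k : ℕ) :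
    rows (mdiag ((rows μ).erase k)) = (rows μ).erase k :=
  rows_mdiag (fun x hx => pos_of_mem_rows (Multiset.mem_of_mem_erase hx))

lemma rows_mdiag_cons (k : ℕ) (hk : 0 < k) (ρ : YoungDiagram) :
    rows (mdiag (k ::ₘ rows ρ)) = k ::ₘ rows ρ :=
  rows_mdiag (fun x hx => by
    rcases Multiset.mem_cons.mp hx with h | h
    · subst h; exact hk
    · exact pos_of_mem_rows h)

lemma p_row_mul (k : ℕ) (hk : 0 < k) (ρ : YoungDiagram) :
    S.p (rowDiagram k) * S.p ρ = S.p (mdiag (k ::ₘ rows ρ)) := by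
  rw [p_mul, rows_rowDiagram hk]
  rfl

lemma D_p_row (k : ℕ) (hk : 0 < k) (μ : YoungDiagram) :
    S.D (S.p (rowDiagram k)) (S.p μ) =
      ((k * (rows μ).count k : ℕ) : ℚ) • S.p (mdiag ((rows μ).erase k)) := by
  apply ext_inner_p S
  intro ρ
  rw [S.D_adjoint, p_row_mul S k hk, S.inner_power, map_smul, LinearMap.smul_apply,
    S.inner_power]
  have hτ : rows (mdiag (k ::ₘ rows ρ)) = k ::ₘ rows ρ := rows_mdiag_cons k hk ρ
  have he : rows (mdiag ((rows μ).erase k)) = (rows μ).erase k := rows_mdiag_erase μ k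
  have hcond1 : μ = mdiag (k ::ₘ rows ρ) ↔ rows μ = k ::ₘ rows ρ := by
    rw [← rows_inj, hτ]
  have hcond2 : mdiag ((rows μ).erase k) = ρ ↔ (rows μ).erase k = rows ρ := by
    rw [← rows_inj, he]
  by_cases hkμ : k ∈ rows μ
  · by_cases heq : rows μ = k ::ₘ rows ρ
    · have herase : (rows μ).erase k = rows ρ := by
        rw [heq, Multiset.erase_cons_head]
      rw [if_pos (hcond1.mpr heq), if_pos (hcond2.mpr herase)]
      have hc : (rows μ).count k = (rows ρ).count k + 1 := by
        rw [heq, Multiset.count_cons_self]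
      rw [zee_eq_zeeM μ, zee_eq_zeeM, he, herase, hc]
      conv_lhs => rw [heq]
      rw [zeeM_cons]
      simp only [smul_eq_mul]
      try push_cast
      try ring
    · rw [if_neg (fun hcc => heq (hcond1.mp hcc)), if_neg (fun hcc => by
        apply heq
        rw [← Multiset.cons_erase hkμ, hcond2.mp hcc])]
      simp
  · have hc0 : (rows μ).count k = 0 := Multiset.count_eq_zero.mpr hkμ
    rw [if_neg (fun hcc => by
      have := hcond1.mp hcc
      exact hkμ (this ▸ Multiset.mem_cons_self k (rows ρ)))]
    simp [hc0]

lemma D_p_row_deriv (k : ℕ) (hk : 0 < k) (x y : Λ) :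
    S.D (S.p (rowDiagram k)) (x * y) =
      S.D (S.p (rowDiagram k)) x * y + x * S.D (S.p (rowDiagram k)) y := by
  set pk := S.p (rowDiagram k) with hpk
  let M1 : Λ →ₗ[ℚ] Λ →ₗ[ℚ] Λ := (LinearMap.mul ℚ Λ).compr₂ (S.D pk)
  let M2 : Λ →ₗ[ℚ] Λ →ₗ[ℚ] Λ := LinearMap.mk₂ ℚ (fun x y => S.D pk x * y + x * S.D pk y)
    (fun m₁ m₂ n => by rw [map_add]; ring)
    (fun c m n => by rw [map_smul, smul_mul_assoc, smul_mul_assoc, ← smul_add])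
    (fun m n₁ n₂ => by rw [map_add]; ring)
    (fun c m n => by rw [map_smul, mul_smul_comm, mul_smul_comm, ← smul_add])
  have hM : M1 = M2 := by
    apply S.p.ext
    intro μ
    apply S.p.ext
    intro ν
    show S.D pk (S.p μ * S.p ν) = S.D pk (S.p μ) * S.p ν + S.p μ * S.D pk (S.p ν)
    rw [p_mul, D_p_row S k hk, D_p_row S k hk, D_p_row S k hk,
      rows_mdiag (fun x hx => by
        rcases Multiset.mem_add.mp hx with h | h
        · exact pos_of_mem_rows h
        · exact pos_of_mem_rows h)]
    rw [smul_mul_assoc, mul_smul_comm, p_mul, p_mul, rows_mdiag_erase, rows_mdiag_erase]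
    by_cases ha : k ∈ rows μ
    · by_cases hb : k ∈ rows ν
      · have h1 : (rows μ + rows ν).erase k = (rows μ).erase k + rows ν :=
          Multiset.erase_add_left_pos _ ha
        have h2 : (rows μ).erase k + rows ν = rows μ + (rows ν).erase k := by
          rw [← Multiset.erase_add_left_pos _ ha, Multiset.erase_add_right_pos _ hb]
        rw [h1, ← h2, Multiset.count_add]
        rw [← add_smul]
        congr 1
        push_cast
        ring
      · have hc0 : (rows ν).count k = 0 := Multiset.count_eq_zero.mpr hb
        rw [Multiset.erase_add_left_pos _ ha, Multiset.count_add, hc0]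
        simp
    · have hc0 : (rows μ).count k = 0 := Multiset.count_eq_zero.mpr ha
      by_cases hb : k ∈ rows ν
      · rw [Multiset.erase_add_right_pos _ hb, Multiset.count_add, hc0]
        simp
      · have hc0' : (rows ν).count k = 0 := Multiset.count_eq_zero.mpr hb
        have hnk : k ∉ rows μ + rows ν := by
          rw [Multiset.mem_add]; tauto
        rw [Multiset.count_eq_zero.mpr hnk]
        simp [hc0, hc0']
  have := congrArg (fun (M : Λ →ₗ[ℚ] Λ →ₗ[ℚ] Λ) => M x y) hM
  simpa [M1, M2] using this

lemma repr_p_s_relation (κ l : YoungDiagram) :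
    S.p.repr (S.s l) κ = 0 ↔ S.s.repr (S.p κ) l = 0 := by
  have h1 : S.inner (S.s l) (S.p κ) = zee κ * S.p.repr (S.s l) κ := inner_p_eq S _ _
  have h2 : S.inner (S.p κ) (S.s l) = S.s.repr (S.p κ) l := inner_s_eq S _ _
  rw [S.inner_symm] at h1
  rw [h1] at h2
  constructor
  · intro h; rw [h, mul_zero] at h2; exact h2.symm
  · intro h; rw [← h2] at h; exact (mul_eq_zero.mp h).resolve_left (zee_ne_zero κ)

lemma D_s_support_finite (f : Λ) : {l : YoungDiagram | S.D (S.s l) f ≠ 0}.Finite := by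
  classical
  set F := (S.p.repr f).support with hF
  set n := F.sup wt with hn
  have hbig : (⋃ μ ∈ {μ : YoungDiagram | wt μ ≤ n},
      {l | S.s.repr (S.p μ) l ≠ 0}).Finite := by
    apply Set.Finite.biUnion (wt_finite n)
    intro μ _
    exact (S.s.repr (S.p μ)).finite_support
  apply hbig.subset
  intro l hl
  simp only [Set.mem_setOf_eq] at hl
  by_contra hcon
  simp only [Set.mem_iUnion, Set.mem_setOf_eq, not_exists, not_and, ne_eq, not_not] at hcon
  replace hcon : ∀ μ, wt μ ≤ n → S.s.repr (S.p μ) l = 0 := fun μ h => hcon μ h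
  apply hl
  apply ext_inner_p S
  intro ρ
  rw [S.D_adjoint, map_zero, LinearMap.zero_apply]
  have hexp : S.s l = (S.p.repr (S.s l)).sum fun κ c => c • S.p κ := by
    rw [← Finsupp.linearCombination_apply, S.p.linearCombination_repr]
  rw [hexp, Finsupp.sum_mul, Finsupp.sum, map_sum]
  apply Finset.sum_eq_zero
  intro κ hκ
  rw [smul_mul_assoc, map_smul, p_mul]
  have hwtκ : n < wt κ := by
    by_contra hle
    push_neg at hle
    have := hcon κ hle
    rw [← repr_p_s_relation] at this
    exact (Finsupp.mem_support_iff.mp hκ) this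
  have hτ : wt (mdiag (rows κ + rows ρ)) = wt κ + wt ρ := by
    unfold wt
    rw [rows_mdiag (fun x hx => by
      rcases Multiset.mem_add.mp hx with h | h
      · exact pos_of_mem_rows h
      · exact pos_of_mem_rows h)]
    exact Multiset.sum_add _ _
  have hτn : ¬ (wt (mdiag (rows κ + rows ρ)) ≤ n) := by omega
  have hτF : mdiag (rows κ + rows ρ) ∉ F := by
    intro hmem
    exact hτn (Finset.le_sup (f := wt) hmem)
  rw [inner_p_eq, Finsupp.notMem_support_iff.mp hτF]
  simp

lemma lmap_finsum {M N : Type*} [AddCommMonoid M] [AddCommMonoid N] [Module ℚ M]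
    [Module ℚ N] (L : M →ₗ[ℚ] N) {ι : Type*} (f : ι → M)
    (hf : (Function.support f).Finite) : L (∑ᶠ i, f i) = ∑ᶠ i, L (f i) :=
  L.toAddMonoidHom.map_finsum hf

def Emap (f g : Λ) : Λ ⊗[ℚ] Λ →ₗ[ℚ] Λ :=
  TensorProduct.lift (LinearMap.mk₂ ℚ (fun x y => S.D x f * S.D y g)
    (fun x x' y => by rw [D_add]; ring)
    (fun c x y => by rw [D_smul, smul_mul_assoc])
    (fun x y y' => by rw [D_add]; ring)
    (fun c x y => by rw [D_smul, mul_smul_comm]))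

@[simp] lemma Emap_tmul (f g x y : Λ) :
    Emap S f g (x ⊗ₜ[ℚ] y) = S.D x f * S.D y g := rfl

def Jmap (f g : Λ) : Λ ⊗[ℚ] Λ →ₗ[ℚ] ℚ :=
  TensorProduct.lift (LinearMap.mk₂ ℚ (fun x y => S.inner f x * S.inner g y)
    (fun x x' y => by rw [map_add]; ring)
    (fun c x y => by rw [map_smul, smul_eq_mul, smul_eq_mul]; ring)
    (fun x y y' => by rw [map_add]; ring)
    (fun c x y => by rw [map_smul, smul_eq_mul, smul_eq_mul]; ring))

@[simp] lemma Jmap_tmul (f g x y : Λ) :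
    Jmap S f g (x ⊗ₜ[ℚ] y) = S.inner f x * S.inner g y := rfl

lemma delta_support_finite (h : Λ) :
    (Function.support fun l => S.s l ⊗ₜ[ℚ] S.D (S.s l) h).Finite := by
  apply (D_s_support_finite S h).subset
  intro l hl
  simp only [Function.mem_support] at hl
  simp only [Set.mem_setOf_eq]
  intro hc
  apply hl
  rw [hc, TensorProduct.tmul_zero]

def delta (h : Λ) : Λ ⊗[ℚ] Λ := ∑ᶠ l, S.s l ⊗ₜ[ℚ] S.D (S.s l) h

def Delta : Λ →ₗ[ℚ] Λ ⊗[ℚ] Λ where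
  toFun := delta S
  map_add' := fun h₁ h₂ => by
    unfold delta
    rw [← finsum_add_distrib (delta_support_finite S h₁) (delta_support_finite S h₂)]
    apply finsum_congr
    intro l
    rw [map_add, TensorProduct.tmul_add]
  map_smul' := fun c h => by
    unfold delta
    simp only [RingHom.id_apply]
    have h1 : ∀ l : YoungDiagram, S.s l ⊗ₜ[ℚ] S.D (S.s l) (c • h)
        = c • (S.s l ⊗ₜ[ℚ] S.D (S.s l) h) := by
      intro l
      rw [map_smul, TensorProduct.tmul_smul]
    rw [finsum_congr h1, ← smul_finsum' c (delta_support_finite S h)]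

lemma Delta_apply (h : Λ) : Delta S h = ∑ᶠ l, S.s l ⊗ₜ[ℚ] S.D (S.s l) h := rfl

lemma expand_s (f : Λ) : ∑ᶠ l, S.s.repr f l • S.s l = f := by
  rw [finsum_eq_finset_sum_of_support_subset _ (s := (S.s.repr f).support) (by
    intro l hl
    simp only [Function.mem_support] at hl
    simp only [Finset.coe_sort_coe, Finset.mem_coe, Finsupp.mem_support_iff]
    intro hc
    apply hl
    rw [hc, zero_smul])]
  conv_rhs => rw [← S.s.linearCombination_repr f]
  rw [Finsupp.linearCombination_apply, Finsupp.sum]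

lemma J_delta (f g h : Λ) : Jmap S f g (Delta S h) = S.inner h (f * g) := by
  rw [Delta_apply, lmap_finsum _ _ (delta_support_finite S h)]
  set K : Λ →ₗ[ℚ] ℚ := (S.inner h).comp (LinearMap.mulRight ℚ g) with hK
  have hterm : ∀ l, Jmap S f g (S.s l ⊗ₜ[ℚ] S.D (S.s l) h) = K (S.s.repr f l • S.s l) := by
    intro l
    rw [Jmap_tmul, map_smul, hK, LinearMap.comp_apply, LinearMap.mulRight_apply]
    rw [inner_s_eq, S.inner_symm g, S.D_adjoint]
    simp [mul_comm]
  have hsupfin : (Function.support fun l => S.s.repr f l • S.s l).Finite := by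
    apply Set.Finite.subset (Finsupp.finite_support (S.s.repr f))
    intro l hl
    simp only [Function.mem_support] at hl ⊢
    intro hc
    apply hl
    rw [hc, zero_smul]
  rw [finsum_congr hterm, ← lmap_finsum K _ hsupfin, expand_s, hK]
  rfl

lemma J_ext {t t' : Λ ⊗[ℚ] Λ} (hJ : ∀ f g, Jmap S f g t = Jmap S f g t') : t = t' := by
  classical
  set B := Module.Basis.tensorProduct S.p S.p with hB
  have key : ∀ (ρ σ : YoungDiagram) (u : Λ ⊗[ℚ] Λ),
      Jmap S (S.p ρ) (S.p σ) u = zee ρ * zee σ * B.repr u (ρ, σ) := by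
    intro ρ σ
    have hmaps : Jmap S (S.p ρ) (S.p σ) =
        (zee ρ * zee σ) • ((Finsupp.lapply (ρ, σ)).comp B.repr.toLinearMap) := by
      apply B.ext
      rintro ⟨μ, ν⟩
      rw [hB, Module.Basis.tensorProduct_apply]
      simp only [Jmap_tmul, LinearMap.smul_apply, LinearMap.comp_apply,
        LinearEquiv.coe_toLinearMap, Finsupp.lapply_apply, smul_eq_mul,
        Module.Basis.tensorProduct_repr_tmul_apply, Module.Basis.repr_self, Finsupp.single_apply,
        S.inner_power]
      by_cases h1 : ρ = μ <;> by_cases h2 : σ = ν <;>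
        simp [h1, h2, eq_comm] <;> ring
    intro u
    rw [hmaps]
    simp [mul_assoc]
  apply B.repr.injective
  ext ⟨ρ, σ⟩
  have := hJ (S.p ρ) (S.p σ)
  rw [key, key] at this
  rw [mul_assoc, mul_assoc] at this
  exact mul_left_cancel₀ (zee_ne_zero σ) (mul_left_cancel₀ (zee_ne_zero ρ) this)

/-- tensor-product of primitives -/
def Tm (m : Multiset ℕ) : Λ ⊗[ℚ] Λ :=
  (m.map fun k => S.p (rowDiagram k) ⊗ₜ[ℚ] 1 + 1 ⊗ₜ[ℚ] S.p (rowDiagram k)).prod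

lemma Tm_zero : Tm S 0 = 1 := by unfold Tm; simp

lemma Tm_add (m₁ m₂ : Multiset ℕ) : Tm S (m₁ + m₂) = Tm S m₁ * Tm S m₂ := by
  unfold Tm
  rw [Multiset.map_add, Multiset.prod_add]

lemma J_tmul_mul (f g x y : Λ) (t : Λ ⊗[ℚ] Λ) :
    Jmap S f g ((x ⊗ₜ[ℚ] y) * t) = Jmap S (S.D x f) (S.D y g) t := by
  refine LinearMap.congr_fun (f := (Jmap S f g).comp (LinearMap.mulLeft ℚ (x ⊗ₜ[ℚ] y)))
    (g := Jmap S (S.D x f) (S.D y g)) (TensorProduct.ext' fun u v => ?_) t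
  simp only [LinearMap.comp_apply, LinearMap.mulLeft_apply,
    Algebra.TensorProduct.tmul_mul_tmul, Jmap_tmul]
  rw [S.D_adjoint, S.D_adjoint]

lemma E_tmul_mul (f g x y : Λ) (t : Λ ⊗[ℚ] Λ) :
    Emap S f g ((x ⊗ₜ[ℚ] y) * t) = Emap S (S.D x f) (S.D y g) t := by
  refine LinearMap.congr_fun (f := (Emap S f g).comp (LinearMap.mulLeft ℚ (x ⊗ₜ[ℚ] y)))
    (g := Emap S (S.D x f) (S.D y g)) (TensorProduct.ext' fun u v => ?_) t
  simp only [LinearMap.comp_apply, LinearMap.mulLeft_apply,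
    Algebra.TensorProduct.tmul_mul_tmul, Emap_tmul]
  rw [D_mul, D_mul]

/-- counit multiplicativity -/
lemma inner_one_mul (f g : Λ) : S.inner 1 (f * g) = S.inner 1 f * S.inner 1 g := by
  let B1 : Λ →ₗ[ℚ] Λ →ₗ[ℚ] ℚ := (LinearMap.mul ℚ Λ).compr₂ (S.inner 1)
  let B2 : Λ →ₗ[ℚ] Λ →ₗ[ℚ] ℚ := LinearMap.mk₂ ℚ (fun f g => S.inner 1 f * S.inner 1 g)
    (fun x x' y => by rw [map_add]; ring)
    (fun c x y => by rw [map_smul, smul_eq_mul, smul_eq_mul]; ring)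
    (fun x y y' => by rw [map_add]; ring)
    (fun c x y => by rw [map_smul, smul_eq_mul, smul_eq_mul]; ring)
  have hM : B1 = B2 := by
    apply S.p.ext
    intro μ
    apply S.p.ext
    intro ν
    show S.inner 1 (S.p μ * S.p ν) = S.inner 1 (S.p μ) * S.inner 1 (S.p ν)
    rw [p_mul, inner_one_p, inner_one_p, inner_one_p]
    have hbot : mdiag (rows μ + rows ν) = ⊥ ↔ (μ = ⊥ ∧ ν = ⊥) := by
      rw [← rows_inj, rows_mdiag (fun x hx => by
        rcases Multiset.mem_add.mp hx with h | h
        · exact pos_of_mem_rows h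
        · exact pos_of_mem_rows h), rows_bot]
      rw [add_eq_zero]
      constructor
      · rintro ⟨h1, h2⟩
        exact ⟨rows_injective (by rw [h1, rows_bot]), rows_injective (by rw [h2, rows_bot])⟩
      · rintro ⟨rfl, rfl⟩
        rw [rows_bot]
        exact ⟨rfl, rfl⟩
    by_cases h1 : μ = ⊥
    · by_cases h2 : ν = ⊥
      · rw [if_pos (hbot.mpr ⟨h1, h2⟩), if_pos h1, if_pos h2]; norm_num
      · rw [if_neg (fun hc => h2 (hbot.mp hc).2), if_neg h2]; ring
    · rw [if_neg (fun hc => h1 (hbot.mp hc).1), if_neg h1]; ring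
  have := congrArg (fun (M : Λ →ₗ[ℚ] Λ →ₗ[ℚ] ℚ) => M f g) hM
  simpa [B1, B2] using this

lemma J_Tm (m : Multiset ℕ) : ∀ f g : Λ, (∀ x ∈ m, 0 < x) →
    Jmap S f g (Tm S m) = S.inner ((m.map fun k => S.p (rowDiagram k)).prod) (f * g) := by
  induction m using Multiset.induction_on with
  | empty =>
    intro f g _
    rw [Tm_zero, Algebra.TensorProduct.one_def, Jmap_tmul]
    simp only [Multiset.map_zero, Multiset.prod_zero]
    rw [inner_one_mul, S.inner_symm f, S.inner_symm g]
  | cons k m ih =>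
    intro f g hpos
    have hk : 0 < k := hpos k (Multiset.mem_cons_self k m)
    have hm : ∀ x ∈ m, 0 < x := fun x hx => hpos x (Multiset.mem_cons_of_mem hx)
    unfold Tm
    rw [Multiset.map_cons, Multiset.prod_cons, add_mul, map_add]
    have h1 : Jmap S f g ((S.p (rowDiagram k) ⊗ₜ[ℚ] 1) * (Tm S m)) =
        Jmap S (S.D (S.p (rowDiagram k)) f) g (Tm S m) := by
      rw [J_tmul_mul, D_one S]
    have h2 : Jmap S f g (((1 : Λ) ⊗ₜ[ℚ] S.p (rowDiagram k)) * (Tm S m)) =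
        Jmap S f (S.D (S.p (rowDiagram k)) g) (Tm S m) := by
      rw [J_tmul_mul, D_one S]
    rw [show ((m.map fun k => S.p (rowDiagram k) ⊗ₜ[ℚ] 1 + 1 ⊗ₜ[ℚ] S.p (rowDiagram k)).prod : Λ ⊗[ℚ] Λ) = Tm S m from rfl]
    rw [h1, h2, ih _ _ hm, ih _ _ hm]
    rw [Multiset.map_cons, Multiset.prod_cons]
    rw [← map_add, ← D_p_row_deriv S k hk]
    rw [S.inner_symm, S.D_adjoint, S.inner_symm]

lemma Delta_p (μ : YoungDiagram) : Delta S (S.p μ) = Tm S (rows μ) := by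
  apply J_ext S
  intro f g
  rw [J_delta, J_Tm S (rows μ) f g (fun x hx => pos_of_mem_rows hx), ← p_eq_rows_prod]

lemma Delta_one : Delta S (1 : Λ) = 1 := by
  rw [one_eq_p_bot, Delta_p, rows_bot, Tm_zero]

lemma Delta_mul (a b : Λ) : Delta S (a * b) = Delta S a * Delta S b := by
  let M1 : Λ →ₗ[ℚ] Λ →ₗ[ℚ] Λ ⊗[ℚ] Λ := (LinearMap.mul ℚ Λ).compr₂ (Delta S)
  let M2 : Λ →ₗ[ℚ] Λ →ₗ[ℚ] Λ ⊗[ℚ] Λ :=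
    (LinearMap.mul ℚ (Λ ⊗[ℚ] Λ)).compl₁₂ (Delta S) (Delta S)
  have hM : M1 = M2 := by
    apply S.p.ext
    intro μ
    apply S.p.ext
    intro ν
    show Delta S (S.p μ * S.p ν) = Delta S (S.p μ) * Delta S (S.p ν)
    rw [p_mul, Delta_p, Delta_p, Delta_p, rows_mdiag (fun x hx => by
      rcases Multiset.mem_add.mp hx with h | h
      · exact pos_of_mem_rows h
      · exact pos_of_mem_rows h), Tm_add]
  have := congrArg (fun (M : Λ →ₗ[ℚ] Λ →ₗ[ℚ] Λ ⊗[ℚ] Λ) => M a b) hM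
  simpa [M1, M2] using this

def Qprop (h : Λ) : Prop := ∀ f g : Λ, S.D h (f * g) = Emap S f g (Delta S h)

lemma Q_one : Qprop S 1 := by
  intro f g
  rw [D_one, Delta_one, Algebra.TensorProduct.one_def, Emap_tmul, D_one, D_one]

lemma Q_step {h₂ : Λ} (hq : Qprop S h₂) (f g : Λ) (t : Λ ⊗[ℚ] Λ) :
    S.D h₂ (Emap S f g t) = Emap S f g (t * Delta S h₂) := by
  refine LinearMap.congr_fun (f := (S.D h₂).comp (Emap S f g))
    (g := (Emap S f g).comp (LinearMap.mulRight ℚ (Delta S h₂)))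
    (TensorProduct.ext' fun x y => ?_) t
  simp only [LinearMap.comp_apply, LinearMap.mulRight_apply, Emap_tmul]
  rw [hq (S.D x f) (S.D y g), E_tmul_mul]

lemma Q_mul {h₁ h₂ : Λ} (hq1 : Qprop S h₁) (hq2 : Qprop S h₂) : Qprop S (h₁ * h₂) := by
  intro f g
  rw [D_mul, hq1 f g, Q_step S hq2, ← Delta_mul]

lemma Q_pk {k : ℕ} (hk : 0 < k) : Qprop S (S.p (rowDiagram k)) := by
  intro f g
  rw [D_p_row_deriv S k hk, Delta_p, rows_rowDiagram hk]
  unfold Tm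
  rw [show ({k} : Multiset ℕ) = k ::ₘ 0 from rfl, Multiset.map_cons, Multiset.prod_cons]
  simp only [Multiset.map_zero, Multiset.prod_zero, mul_one]
  rw [map_add, Emap_tmul, Emap_tmul, D_one, D_one]

lemma Q_all (h : Λ) : Qprop S h := by
  intro f g
  let A1 : Λ →ₗ[ℚ] Λ := LinearMap.mk₂ ℚ (fun h' (y : Λ) => S.D h' y)
    (fun x x' y => by rw [D_add])
    (fun c x y => by rw [D_smul])
    (fun x y y' => by rw [map_add])
    (fun c x y => by rw [map_smul]) |>.flip (f * g)
  let A2 : Λ →ₗ[ℚ] Λ := (Emap S f g).comp (Delta S)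
  have hQp : ∀ μ : YoungDiagram, Qprop S (S.p μ) := by
    intro μ
    have hlist : ∀ (l : List ℕ), (∀ k ∈ l, 0 < k) →
        Qprop S ((l.map fun k => S.p (rowDiagram k)).prod) := by
      intro l
      induction l with
      | nil => intro _; simpa using Q_one S
      | cons k t iht =>
        intro hpos
        rw [List.map_cons, List.prod_cons]
        exact Q_mul S (Q_pk S (hpos k (by simp)))
          (iht fun x hx => hpos x (by simp [hx]))
    have := hlist μ.rowLens μ.pos_of_mem_rowLens
    rwa [← S.power_mul μ] at this
  have hA : A1 = A2 := by
    apply S.p.ext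
    intro μ
    show S.D (S.p μ) (f * g) = Emap S f g (Delta S (S.p μ))
    exact hQp μ f g
  exact LinearMap.congr_fun hA h



/-- Commutation relation `D_β ∘ U_α = ∑_λ U_{s_{α/λ}} ∘ D_{s_{β/λ}}`. -/
theorem skewing_comp_mul (α β : YoungDiagram) :
    (S.D (S.s β)) ∘ₗ (S.U (S.s α)) =
      ∑ᶠ l : YoungDiagram, (S.U (S.skew α l)) ∘ₗ (S.D (S.skew β l)) := by
  have hsupfin : (Function.support fun l : YoungDiagram =>
      (S.U (S.skew α l)) ∘ₗ (S.D (S.skew β l))).Finite := by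
    apply (D_s_support_finite S (S.s β)).subset
    intro l hl
    simp only [Function.mem_support] at hl
    simp only [Set.mem_setOf_eq]
    intro hc
    apply hl
    apply LinearMap.ext
    intro g
    have hskew : S.skew β l = 0 := hc
    rw [LinearMap.comp_apply, hskew]
    show S.U (S.skew α l) (S.D 0 g) = 0
    rw [D_zero]
    show S.skew α l * 0 = 0
    rw [mul_zero]
  apply LinearMap.ext
  intro g
  rw [LinearMap.comp_apply]
  have hU : S.U (S.s α) g = S.s α * g := rfl
  rw [hU, Q_all S (S.s β) (S.s α) g, Delta_apply,
    lmap_finsum _ _ (delta_support_finite S (S.s β))]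
  have hRHS : (∑ᶠ l : YoungDiagram, (S.U (S.skew α l)) ∘ₗ (S.D (S.skew β l))) g
      = ∑ᶠ l : YoungDiagram, (S.U (S.skew α l)) ((S.D (S.skew β l)) g) := by
    have := lmap_finsum (LinearMap.applyₗ (R := ℚ) g) _ hsupfin
    simpa using this
  rw [hRHS]
  apply finsum_congr
  intro l
  rw [Emap_tmul]
  rfl

end SymmFn
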